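/- arXiv:2308.00332 — 3 statements merged into one kernel-verified Lean document; each statement's English description precedes it below -/
import Mathlib

section
/- Let x be a trigonometric polynomial of degree N and let f = x^φ. If the number of equally spaced sample points satisfies M > (φ+1)N, then for every harmonic index 0 ≤ k ≤ N, the discrete Fourier coefficient of f computed from the M samples (i.e., the corresponding entry of E*·f̃) equals the exact continuous Fourier coefficient of f of order k. -/
open Real Finset intervalIntegral

namespace RHBaux

/-- Generators: cosines and sines of integer frequencies with `|n| ≤ L`. -/
def TrigSet (L : ℕ) : Set (ℝ → ℝ) :=
  {g | ∃ n : ℤ, |n| ≤ (L : ℤ) ∧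
    (g = (fun t => Real.cos (n * t)) ∨ g = (fun t => Real.sin (n * t)))}

def TrigSpan (L : ℕ) : Submodule ℝ (ℝ → ℝ) := Submodule.span ℝ (TrigSet L)

lemma cos_mem {L : ℕ} {n : ℤ} (h : |n| ≤ (L : ℤ)) :
    (fun t => Real.cos (n * t)) ∈ TrigSpan L :=
  Submodule.subset_span ⟨n, h, Or.inl rfl⟩

lemma sin_mem {L : ℕ} {n : ℤ} (h : |n| ≤ (L : ℤ)) :
    (fun t => Real.sin (n * t)) ∈ TrigSpan L :=
  Submodule.subset_span ⟨n, h, Or.inr rfl⟩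

lemma trigSpan_mono {L L' : ℕ} (h : L ≤ L') : TrigSpan L ≤ TrigSpan L' := by
  apply Submodule.span_mono
  rintro g ⟨n, hn, hg⟩
  exact ⟨n, le_trans hn (by exact_mod_cast h), hg⟩

lemma gen_mul_gen {L L' : ℕ} {g h : ℝ → ℝ} (hg : g ∈ TrigSet L) (hh : h ∈ TrigSet L') :
    g * h ∈ TrigSpan (L + L') := by
  obtain ⟨n, hn, hgc⟩ := hg
  obtain ⟨m, hm, hhc⟩ := hh
  have hadd : |n + m| ≤ ((L + L' : ℕ) : ℤ) := by
    push_cast; exact le_trans (abs_add_le n m) (add_le_add hn hm)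
  have hsub : |n - m| ≤ ((L + L' : ℕ) : ℤ) := by
    push_cast; exact le_trans (abs_sub n m) (add_le_add hn hm)
  rcases hgc with rfl | rfl <;> rcases hhc with rfl | rfl
  · -- cos * cos
    have key : (fun t => Real.cos (n * t)) * (fun t => Real.cos (m * t)) =
        (1/2 : ℝ) • (fun t => Real.cos ((n + m : ℤ) * t)) +
        (1/2 : ℝ) • (fun t => Real.cos ((n - m : ℤ) * t)) := by
      funext t
      simp only [Pi.mul_apply, Pi.add_apply, Pi.smul_apply, smul_eq_mul]
      push_cast
      rw [add_mul, sub_mul, Real.cos_add, Real.cos_sub]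
      ring
    rw [key]
    exact add_mem (Submodule.smul_mem _ _ (cos_mem hadd))
      (Submodule.smul_mem _ _ (cos_mem hsub))
  · -- cos * sin
    have key : (fun t => Real.cos (n * t)) * (fun t => Real.sin (m * t)) =
        (1/2 : ℝ) • (fun t => Real.sin ((n + m : ℤ) * t)) +
        (-(1/2) : ℝ) • (fun t => Real.sin ((n - m : ℤ) * t)) := by
      funext t
      simp only [Pi.mul_apply, Pi.add_apply, Pi.smul_apply, smul_eq_mul]
      push_cast
      rw [add_mul, sub_mul, Real.sin_add, Real.sin_sub]
      ring
    rw [key]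
    exact add_mem (Submodule.smul_mem _ _ (sin_mem hadd))
      (Submodule.smul_mem _ _ (sin_mem hsub))
  · -- sin * cos
    have key : (fun t => Real.sin (n * t)) * (fun t => Real.cos (m * t)) =
        (1/2 : ℝ) • (fun t => Real.sin ((n + m : ℤ) * t)) +
        (1/2 : ℝ) • (fun t => Real.sin ((n - m : ℤ) * t)) := by
      funext t
      simp only [Pi.mul_apply, Pi.add_apply, Pi.smul_apply, smul_eq_mul]
      push_cast
      rw [add_mul, sub_mul, Real.sin_add, Real.sin_sub]
      ring
    rw [key]
    exact add_mem (Submodule.smul_mem _ _ (sin_mem hadd))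
      (Submodule.smul_mem _ _ (sin_mem hsub))
  · -- sin * sin
    have key : (fun t => Real.sin (n * t)) * (fun t => Real.sin (m * t)) =
        (1/2 : ℝ) • (fun t => Real.cos ((n - m : ℤ) * t)) +
        (-(1/2) : ℝ) • (fun t => Real.cos ((n + m : ℤ) * t)) := by
      funext t
      simp only [Pi.mul_apply, Pi.add_apply, Pi.smul_apply, smul_eq_mul]
      push_cast
      rw [add_mul, sub_mul, Real.cos_add, Real.cos_sub]
      ring
    rw [key]
    exact add_mem (Submodule.smul_mem _ _ (cos_mem hsub))
      (Submodule.smul_mem _ _ (cos_mem hadd))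

lemma mul_mem' {L L' : ℕ} {g h : ℝ → ℝ} (hg : g ∈ TrigSpan L) (hh : h ∈ TrigSpan L') :
    g * h ∈ TrigSpan (L + L') := by
  induction hg using Submodule.span_induction with
  | mem g hgs =>
    induction hh using Submodule.span_induction with
    | mem h hhs => exact gen_mul_gen hgs hhs
    | zero => simpa using (TrigSpan (L + L')).zero_mem
    | add u v hu hv hu' hv' => rw [mul_add]; exact add_mem hu' hv'
    | smul c u hu hu' => rw [mul_smul_comm]; exact Submodule.smul_mem _ _ hu'
  | zero => simpa using (TrigSpan (L + L')).zero_mem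
  | add u v hu hv hu' hv' => rw [add_mul]; exact add_mem hu' hv'
  | smul c u hu hu' => rw [smul_mul_assoc]; exact Submodule.smul_mem _ _ hu'

lemma pow_mem {L : ℕ} {g : ℝ → ℝ} (hg : g ∈ TrigSpan L) (k : ℕ) :
    g ^ k ∈ TrigSpan (k * L) := by
  induction k with
  | zero =>
    have : (g ^ 0 : ℝ → ℝ) = fun t => Real.cos ((0 : ℤ) * t) := by
      funext t; simp
    rw [this]
    exact cos_mem (by simp)
  | succ k ih =>
    have : g ^ (k + 1) = g ^ k * g := by ring
    rw [this]
    have := mul_mem' ih hg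
    have heq : k * L + L = (k + 1) * L := by ring
    rwa [heq] at this

/-- Sum of M-th roots of unity type sums. -/
lemma sum_exp_zero (M : ℕ) (hM : 0 < M) (n : ℤ) (hn0 : n ≠ 0) (hn : |n| < (M : ℤ)) :
    ∑ j ∈ Finset.Icc 1 M, Complex.exp ((n : ℂ) * (2 * π * j / M) * Complex.I) = 0 := by
  set z : ℂ := Complex.exp ((n : ℂ) * (2 * π / M) * Complex.I) with hz
  have hMne : (M : ℂ) ≠ 0 := by exact_mod_cast hM.ne'
  have hterm : ∀ j : ℕ, Complex.exp ((n : ℂ) * (2 * π * j / M) * Complex.I) = z ^ j := by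
    intro j
    rw [hz, ← Complex.exp_nat_mul]
    congr 1
    field_simp
  have hzM : z ^ M = 1 := by
    rw [hz, ← Complex.exp_nat_mul]
    have : (M : ℂ) * ((n : ℂ) * (2 * π / M) * Complex.I) = (n : ℂ) * (2 * π * Complex.I) := by
      field_simp
    rw [this]
    exact Complex.exp_int_mul_two_pi_mul_I n
  have hzne : z ≠ 1 := by
    intro hz1
    rw [hz, Complex.exp_eq_one_iff] at hz1
    obtain ⟨k, hk⟩ := hz1
    have hπC : (π : ℂ) ≠ 0 := by
      exact_mod_cast Complex.ofReal_ne_zero.mpr Real.pi_ne_zero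
    have h2pi : (2 * (π : ℂ) * Complex.I) ≠ 0 := by
      simp [Complex.I_ne_zero, hπC]
    field_simp at hk
    have : (n : ℂ) = k * M := by
      apply mul_right_cancel₀ h2pi
      linear_combination (2 * (π : ℂ) * Complex.I) * hk
    have hnk : n = k * M := by exact_mod_cast this
    rcases eq_or_ne k 0 with rfl | hk0
    · simp at hnk; exact hn0 hnk
    · have : (M : ℤ) ≤ |n| := by
        rw [hnk, abs_mul]
        have : (1 : ℤ) ≤ |k| := Int.one_le_abs hk0
        calc (M : ℤ) = 1 * |(M : ℤ)| := by simp
        _ ≤ |k| * |(M : ℤ)| := by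
            apply mul_le_mul_of_nonneg_right this (abs_nonneg _)
      omega
  have hgeom : ∑ j ∈ Finset.range M, z ^ j = 0 := by
    rw [geom_sum_eq hzne, hzM]
    simp
  calc ∑ j ∈ Finset.Icc 1 M, Complex.exp ((n : ℂ) * (2 * π * j / M) * Complex.I)
      = ∑ j ∈ Finset.Icc 1 M, z ^ j := by
        exact Finset.sum_congr rfl fun j _ => hterm j
    _ = ∑ j ∈ Finset.Ico 1 (M + 1), z ^ j := by rw [Finset.Ico_add_one_right_eq_Icc]
    _ = ∑ j ∈ Finset.range (M + 1 - 1), z ^ (1 + j) := by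
        rw [Finset.sum_Ico_eq_sum_range]
    _ = z * ∑ j ∈ Finset.range M, z ^ j := by
        rw [Finset.mul_sum]
        refine Finset.sum_congr (by simp) fun j _ => ?_
        rw [pow_add, pow_one]
    _ = 0 := by rw [hgeom, mul_zero]

lemma disc_cos (M : ℕ) (hM : 0 < M) (n : ℤ) (hn0 : n ≠ 0) (hn : |n| < (M : ℤ)) :
    ∑ j ∈ Finset.Icc 1 M, Real.cos ((n : ℝ) * (2 * π * j / M)) = 0 := by
  have h := sum_exp_zero M hM n hn0 hn
  have : ∑ j ∈ Finset.Icc 1 M, Real.cos ((n : ℝ) * (2 * π * j / M)) =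
      (∑ j ∈ Finset.Icc 1 M, Complex.exp ((n : ℂ) * (2 * π * j / M) * Complex.I)).re := by
    rw [Complex.re_sum]
    refine Finset.sum_congr rfl fun j _ => ?_
    rw [← Complex.exp_ofReal_mul_I_re]
    congr 2
    push_cast
    ring
  rw [this, h, Complex.zero_re]

lemma disc_sin (M : ℕ) (hM : 0 < M) (n : ℤ) (hn0 : n ≠ 0) (hn : |n| < (M : ℤ)) :
    ∑ j ∈ Finset.Icc 1 M, Real.sin ((n : ℝ) * (2 * π * j / M)) = 0 := by
  have h := sum_exp_zero M hM n hn0 hn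
  have : ∑ j ∈ Finset.Icc 1 M, Real.sin ((n : ℝ) * (2 * π * j / M)) =
      (∑ j ∈ Finset.Icc 1 M, Complex.exp ((n : ℂ) * (2 * π * j / M) * Complex.I)).im := by
    rw [Complex.im_sum]
    refine Finset.sum_congr rfl fun j _ => ?_
    rw [← Complex.exp_ofReal_mul_I_im]
    congr 2
    push_cast
    ring
  rw [this, h, Complex.zero_im]

lemma int_cos (n : ℤ) (hn0 : n ≠ 0) :
    ∫ θ in (0 : ℝ)..(2 * π), Real.cos ((n : ℝ) * θ) = 0 := by
  have hne : (n : ℝ) ≠ 0 := by exact_mod_cast hn0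
  rw [intervalIntegral.integral_comp_mul_left (fun x => Real.cos x) hne]
  simp only [mul_zero, integral_cos, Real.sin_zero, sub_zero, smul_eq_mul]
  have : Real.sin ((n : ℝ) * (2 * π)) = 0 := by
    rw [show (n : ℝ) * (2 * π) = ((2 * n : ℤ) : ℝ) * π by push_cast; ring]
    exact Real.sin_int_mul_pi (2 * n)
  rw [this, mul_zero]

lemma int_sin (n : ℤ) (hn0 : n ≠ 0) :
    ∫ θ in (0 : ℝ)..(2 * π), Real.sin ((n : ℝ) * θ) = 0 := by
  have hne : (n : ℝ) ≠ 0 := by exact_mod_cast hn0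
  rw [intervalIntegral.integral_comp_mul_left (fun x => Real.sin x) hne]
  simp only [mul_zero, integral_sin, Real.cos_zero, smul_eq_mul]
  have : Real.cos ((n : ℝ) * (2 * π)) = 1 := Real.cos_int_mul_two_pi n
  rw [this, sub_self, mul_zero]

/-- Key lemma: discrete mean equals continuous mean for trig polys of degree < M. -/
lemma key (M L : ℕ) (hM : 0 < M) (hLM : (L : ℤ) < (M : ℤ)) {g : ℝ → ℝ}
    (hg : g ∈ TrigSpan L) :
    Continuous g ∧
      (1 / (M : ℝ)) * ∑ j ∈ Finset.Icc 1 M, g (2 * π * j / M) =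
        (1 / (2 * π)) * ∫ θ in (0 : ℝ)..(2 * π), g θ := by
  have hπ : π ≠ 0 := Real.pi_ne_zero
  induction hg using Submodule.span_induction with
  | mem g hgs =>
    obtain ⟨n, hn, hgc⟩ := hgs
    have hnM : |n| < (M : ℤ) := lt_of_le_of_lt hn hLM
    rcases hgc with rfl | rfl
    · refine ⟨(Real.continuous_cos).comp (continuous_const.mul continuous_id), ?_⟩
      rcases eq_or_ne n 0 with rfl | hn0
      · simp only [Int.cast_zero, zero_mul, Real.cos_zero]
        rw [Finset.sum_const, Nat.card_Icc]
        simp only [intervalIntegral.integral_const, smul_eq_mul, mul_one, sub_zero]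
        have hM0 : (M : ℝ) ≠ 0 := by exact_mod_cast hM.ne'
        field_simp
        simp
      · rw [disc_cos M hM n hn0 hnM, int_cos n hn0]
        simp
    · refine ⟨(Real.continuous_sin).comp (continuous_const.mul continuous_id), ?_⟩
      rcases eq_or_ne n 0 with rfl | hn0
      · simp
      · rw [disc_sin M hM n hn0 hnM, int_sin n hn0]
        simp
  | zero => exact ⟨continuous_const.congr (fun x => rfl), by simp⟩
  | add u v hu hv hu' hv' =>
    obtain ⟨hcu, heu⟩ := hu'
    obtain ⟨hcv, hev⟩ := hv'
    refine ⟨hcu.add hcv, ?_⟩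
    have hiu : IntervalIntegrable u MeasureTheory.volume 0 (2 * π) :=
      hcu.intervalIntegrable _ _
    have hiv : IntervalIntegrable v MeasureTheory.volume 0 (2 * π) :=
      hcv.intervalIntegrable _ _
    simp only [Pi.add_apply]
    rw [Finset.sum_add_distrib, intervalIntegral.integral_add hiu hiv]
    rw [mul_add, mul_add, heu, hev]
  | smul c u hu hu' =>
    obtain ⟨hcu, heu⟩ := hu'
    refine ⟨hcu.const_smul c, ?_⟩
    simp only [Pi.smul_apply, smul_eq_mul]
    rw [← Finset.mul_sum, intervalIntegral.integral_const_mul]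
    calc (1 / (M : ℝ)) * (c * ∑ j ∈ Finset.Icc 1 M, u (2 * π * j / M))
        = c * ((1 / (M : ℝ)) * ∑ j ∈ Finset.Icc 1 M, u (2 * π * j / M)) := by ring
      _ = c * ((1 / (2 * π)) * ∫ θ in (0 : ℝ)..(2 * π), u θ) := by rw [heu]
      _ = 1 / (2 * π) * (c * ∫ θ in (0 : ℝ)..(2 * π), u θ) := by ring

end RHBaux

open RHBaux in
theorem conditional_equivalence_RHB (N φ M : ℕ) (hφ : 1 ≤ φ) (hM : M > (φ + 1) * N)
    (a b : ℕ → ℝ) (x f : ℝ → ℝ)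
    (hx : ∀ t, x t = a 0 + ∑ n ∈ Finset.Icc 1 N,
        (a n * Real.cos (n * t) + b n * Real.sin (n * t)))
    (hf : ∀ t, f t = (x t) ^ φ) :
    ((1 / (M : ℝ)) * ∑ j ∈ Finset.Icc 1 M, f (2 * π * j / M) =
        (1 / (2 * π)) * ∫ θ in (0 : ℝ)..(2 * π), f θ) ∧
    ∀ k, 1 ≤ k → k ≤ N →
      ((2 / (M : ℝ)) * ∑ j ∈ Finset.Icc 1 M, f (2 * π * j / M) * Real.cos (k * (2 * π * j / M)) =
          (1 / π) * ∫ θ in (0 : ℝ)..(2 * π), f θ * Real.cos (k * θ)) ∧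
      ((2 / (M : ℝ)) * ∑ j ∈ Finset.Icc 1 M, f (2 * π * j / M) * Real.sin (k * (2 * π * j / M)) =
          (1 / π) * ∫ θ in (0 : ℝ)..(2 * π), f θ * Real.sin (k * θ)) := by
  have hM0 : 0 < M := lt_of_le_of_lt (Nat.zero_le _) hM
  -- x is a trig poly of degree N
  have hxmem : x ∈ TrigSpan N := by
    have hxeq : x = (a 0) • (fun t => Real.cos (((0 : ℤ) : ℝ) * t)) +
        ∑ n ∈ Finset.Icc 1 N,
          ((a n) • (fun t => Real.cos (((n : ℤ) : ℝ) * t)) +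
           (b n) • (fun t => Real.sin (((n : ℤ) : ℝ) * t))) := by
      funext t
      simp only [Pi.add_apply, Pi.smul_apply, Finset.sum_apply, smul_eq_mul,
        Int.cast_zero, zero_mul, Real.cos_zero, mul_one, Int.cast_natCast]
      exact hx t
    rw [hxeq]
    refine add_mem (Submodule.smul_mem _ _ (cos_mem (by simp))) (Submodule.sum_mem _ ?_)
    intro n hn
    have hnN : |(n : ℤ)| ≤ (N : ℤ) := by
      rw [abs_of_nonneg (Int.natCast_nonneg n)]
      exact_mod_cast (Finset.mem_Icc.mp hn).2
    exact add_mem (Submodule.smul_mem _ _ (cos_mem hnN))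
      (Submodule.smul_mem _ _ (sin_mem hnN))
  -- f is a trig poly of degree φ * N
  have hfmem : f ∈ TrigSpan (φ * N) := by
    have : f = x ^ φ := by funext t; rw [hf t]; simp
    rw [this]
    exact pow_mem hxmem φ
  have hφN : ((φ * N : ℕ) : ℤ) < (M : ℤ) := by
    have h1 : φ * N ≤ (φ + 1) * N := Nat.mul_le_mul_right N (Nat.le_succ φ)
    exact_mod_cast lt_of_le_of_lt h1 hM
  constructor
  · exact (key M (φ * N) hM0 hφN hfmem).2
  · intro k hk1 hkN
    have hkmem : |(k : ℤ)| ≤ (N : ℤ) := by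
      rw [abs_of_nonneg (Int.natCast_nonneg k)]
      exact_mod_cast hkN
    have hπ : π ≠ 0 := Real.pi_ne_zero
    have hdeg : ((φ * N + N : ℕ) : ℤ) < (M : ℤ) := by
      have : φ * N + N = (φ + 1) * N := by ring
      rw [this]
      exact_mod_cast hM
    constructor
    · -- cosine coefficient
      have hmem : f * (fun t => Real.cos (((k : ℤ) : ℝ) * t)) ∈ TrigSpan (φ * N + N) :=
        mul_mem' hfmem (cos_mem hkmem)
      have h := (key M (φ * N + N) hM0 hdeg hmem).2
      simp only [Pi.mul_apply, Int.cast_natCast] at h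
      calc (2 / (M : ℝ)) * ∑ j ∈ Finset.Icc 1 M,
              f (2 * π * j / M) * Real.cos (k * (2 * π * j / M))
          = 2 * ((1 / (M : ℝ)) * ∑ j ∈ Finset.Icc 1 M,
              f (2 * π * j / M) * Real.cos (k * (2 * π * j / M))) := by ring
        _ = 2 * ((1 / (2 * π)) * ∫ θ in (0 : ℝ)..(2 * π), f θ * Real.cos (k * θ)) := by
            rw [h]
        _ = (1 / π) * ∫ θ in (0 : ℝ)..(2 * π), f θ * Real.cos (k * θ) := by
            field_simp
    · -- sine coefficient
      have hmem : f * (fun t => Real.sin (((k : ℤ) : ℝ) * t)) ∈ TrigSpan (φ * N + N) :=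
        mul_mem' hfmem (sin_mem hkmem)
      have h := (key M (φ * N + N) hM0 hdeg hmem).2
      simp only [Pi.mul_apply, Int.cast_natCast] at h
      calc (2 / (M : ℝ)) * ∑ j ∈ Finset.Icc 1 M,
              f (2 * π * j / M) * Real.sin (k * (2 * π * j / M))
          = 2 * ((1 / (M : ℝ)) * ∑ j ∈ Finset.Icc 1 M,
              f (2 * π * j / M) * Real.sin (k * (2 * π * j / M))) := by ring
        _ = 2 * ((1 / (2 * π)) * ∫ θ in (0 : ℝ)..(2 * π), f θ * Real.sin (k * θ)) := by
            rw [h]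
        _ = (1 / π) * ∫ θ in (0 : ℝ)..(2 * π), f θ * Real.sin (k * θ) := by
            field_simp
end

section
/- Let ω₁, ω₂ be positive integers with gcd(ω₁, ω₂) = g, and let x(t) be a two-frequency trigonometric polynomial with frequencies {mω₁ + nω₂ : |m|+|n| ≤ p}. Then x^φ is a trigonometric polynomial in the frequency g·ℤ whose maximal harmonic index (in units of g) is at most φ·p·max(ω₁, ω₂)/g; hence sampling x^φ at M equally spaced points over the period T = 2π/g with M > (φ+1)·p·max(ω₁, ω₂)/g recovers all harmonics of order up to p·max(ω₁, ω₂)/g without aliasing. -/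
open Real Finset

noncomputable def Efun (g : ℕ) (k : ℤ) (t : ℝ) : ℂ :=
  Complex.exp ((k : ℂ) * (g : ℂ) * (t : ℂ) * Complex.I)

lemma Efun_add (g : ℕ) (k l : ℤ) (t : ℝ) : Efun g (k + l) t = Efun g k t * Efun g l t := by
  rw [Efun, Efun, Efun, ← Complex.exp_add]
  congr 1; push_cast; ring

def IsTrig (g N : ℕ) (f : ℝ → ℂ) : Prop :=
  ∃ e : ℤ → ℂ, (∀ k : ℤ, k ∉ Finset.Icc (-(N : ℤ)) (N : ℤ) → e k = 0) ∧
    ∀ t, f t = ∑ k ∈ Finset.Icc (-(N : ℤ)) (N : ℤ), e k * Efun g k t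

lemma IsTrig.congr {g N : ℕ} {f f' : ℝ → ℂ} (h : IsTrig g N f) (hf : ∀ t, f t = f' t) :
    IsTrig g N f' := by
  obtain ⟨e, he, hsum⟩ := h
  exact ⟨e, he, fun t => (hf t) ▸ hsum t⟩

lemma IsTrig.mono {g N N' : ℕ} {f : ℝ → ℂ} (h : IsTrig g N f) (hN : N ≤ N') :
    IsTrig g N' f := by
  obtain ⟨e, he, hsum⟩ := h
  have hsub : Finset.Icc (-(N : ℤ)) (N : ℤ) ⊆ Finset.Icc (-(N' : ℤ)) (N' : ℤ) := by
    apply Finset.Icc_subset_Icc <;> omega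
  refine ⟨e, fun k hk => he k (fun hk' => hk (hsub hk')), fun t => ?_⟩
  rw [hsum t]
  apply Finset.sum_subset hsub
  intro k _ hk
  rw [he k hk, zero_mul]

lemma isTrig_single {g N : ℕ} (ℓ : ℤ) (hℓ : ℓ.natAbs ≤ N) (u : ℂ) :
    IsTrig g N (fun t => u * Efun g ℓ t) := by
  have hmem : ℓ ∈ Finset.Icc (-(N : ℤ)) (N : ℤ) := by simp [Finset.mem_Icc]; omega
  refine ⟨fun k => if k = ℓ then u else 0,
    fun k hk => if_neg (by rintro rfl; exact hk hmem), fun t => ?_⟩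
  simp only [ite_mul, zero_mul]
  rw [Finset.sum_ite_eq' _ ℓ (fun k => u * Efun g k t), if_pos hmem]

lemma isTrig_zero (g N : ℕ) : IsTrig g N (fun _ => 0) := by
  refine ⟨fun _ => 0, fun _ _ => rfl, fun t => by simp⟩

lemma isTrig_one (g : ℕ) : IsTrig g 0 (fun _ => 1) := by
  have := isTrig_single (g := g) (N := 0) 0 (by simp) 1
  exact this.congr (fun t => by simp [Efun])

lemma IsTrig.add {g N : ℕ} {f₁ f₂ : ℝ → ℂ} (h₁ : IsTrig g N f₁) (h₂ : IsTrig g N f₂) :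
    IsTrig g N (fun t => f₁ t + f₂ t) := by
  obtain ⟨e₁, he₁, hs₁⟩ := h₁
  obtain ⟨e₂, he₂, hs₂⟩ := h₂
  refine ⟨fun k => e₁ k + e₂ k,
    fun k hk => by simp only []; rw [he₁ k hk, he₂ k hk, add_zero], fun t => ?_⟩
  show f₁ t + f₂ t = _
  rw [hs₁ t, hs₂ t, ← Finset.sum_add_distrib]
  exact Finset.sum_congr rfl (fun k _ => by ring)

lemma isTrig_sum {ι : Type*} (s : Finset ι) (F : ι → ℝ → ℂ) {g N : ℕ}
    (h : ∀ i ∈ s, IsTrig g N (F i)) :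
    IsTrig g N (fun t => ∑ i ∈ s, F i t) := by
  induction s using Finset.cons_induction with
  | empty => exact (isTrig_zero g N).congr (fun t => by simp)
  | cons i s his ih =>
      have h1 := h i (Finset.mem_cons_self i s)
      have h2 := ih (fun j hj => h j (Finset.mem_cons_of_mem hj))
      exact (h1.add h2).congr (fun t => by rw [Finset.sum_cons])

lemma IsTrig.mul {g N₁ N₂ : ℕ} {f₁ f₂ : ℝ → ℂ} (h₁ : IsTrig g N₁ f₁) (h₂ : IsTrig g N₂ f₂) :
    IsTrig g (N₁ + N₂) (fun t => f₁ t * f₂ t) := by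
  obtain ⟨e₁, he₁, hs₁⟩ := h₁
  obtain ⟨e₂, he₂, hs₂⟩ := h₂
  refine ⟨fun k => ∑ k₁ ∈ Finset.Icc (-(N₁ : ℤ)) (N₁ : ℤ), e₁ k₁ * e₂ (k - k₁), ?_, ?_⟩
  · intro k hk
    simp only [Finset.mem_Icc, not_and, not_le] at hk
    apply Finset.sum_eq_zero
    intro k₁ hk₁
    simp only [Finset.mem_Icc] at hk₁
    rw [he₂ (k - k₁) (by simp only [Finset.mem_Icc, not_and, not_le]; push_cast; omega),
      mul_zero]
  · intro t
    show f₁ t * f₂ t = _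
    rw [hs₁ t, hs₂ t, Finset.sum_mul_sum]
    simp only [Finset.sum_mul]
    conv_rhs => rw [Finset.sum_comm]
    apply Finset.sum_congr rfl
    intro k₁ hk₁
    simp only [Finset.mem_Icc] at hk₁
    have hJsub : Finset.Icc (k₁ + -(N₂ : ℤ)) (k₁ + (N₂ : ℤ))
        ⊆ Finset.Icc (-((N₁ + N₂ : ℕ) : ℤ)) ((N₁ + N₂ : ℕ) : ℤ) := by
      apply Finset.Icc_subset_Icc <;> push_cast <;> omega
    have hzero : ∀ k ∈ Finset.Icc (-((N₁ + N₂ : ℕ) : ℤ)) ((N₁ + N₂ : ℕ) : ℤ),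
        k ∉ Finset.Icc (k₁ + -(N₂ : ℤ)) (k₁ + (N₂ : ℤ)) →
        e₁ k₁ * e₂ (k - k₁) * Efun g k t = 0 := by
      intro k _ hk
      rw [he₂ (k - k₁) (by simp only [Finset.mem_Icc, not_and, not_le] at hk ⊢; omega),
        mul_zero, zero_mul]
    rw [← Finset.sum_subset hJsub hzero, ← Finset.map_add_left_Icc, Finset.sum_map]
    apply Finset.sum_congr rfl
    intro k₂ _
    simp only [addLeftEmbedding_apply, add_sub_cancel_left]
    rw [Efun_add]
    ring

lemma IsTrig.pow {g N : ℕ} {f : ℝ → ℂ} (h : IsTrig g N f) (n : ℕ) :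
    IsTrig g (n * N) (fun t => f t ^ n) := by
  induction n with
  | zero =>
      rw [Nat.zero_mul]
      exact (isTrig_one g).congr (fun t => (pow_zero _).symm)
  | succ n ih =>
      have := ih.mul h
      have h2 : n * N + N = (n + 1) * N := by ring
      rw [h2] at this
      exact this.congr (fun t => by rw [pow_succ])

lemma isTrig_trig {g N : ℕ} (ℓ : ℤ) (hℓ : ℓ.natAbs ≤ N) (a b : ℝ) :
    IsTrig g N (fun t =>
      (a : ℂ) * Complex.cos (((ℓ : ℂ) * g) * t) + (b : ℂ) * Complex.sin (((ℓ : ℂ) * g) * t)) := by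
  have h1 := isTrig_single (g := g) ℓ hℓ (((a : ℂ) - b * Complex.I) / 2)
  have h2 := isTrig_single (g := g) (-ℓ) (by simpa using hℓ) (((a : ℂ) + b * Complex.I) / 2)
  refine (h1.add h2).congr (fun t => ?_)
  show _ = _
  have hE1 : Efun g ℓ t = Complex.exp ((((ℓ : ℂ) * g) * t) * Complex.I) := by
    rw [Efun]
  have hE2 : Efun g (-ℓ) t = Complex.exp ((-(((ℓ : ℂ) * g) * t)) * Complex.I) := by
    rw [Efun]; congr 1; push_cast; ring
  rw [hE1, hE2, Complex.exp_mul_I, Complex.exp_mul_I, Complex.cos_neg, Complex.sin_neg]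
  set θ := ((ℓ : ℂ) * g) * t
  linear_combination (-(b : ℂ) * Complex.sin θ) * Complex.I_sq

lemma sum_Icc_neg (N : ℕ) (F : ℤ → ℝ) :
    ∑ k ∈ Finset.Icc (-(N : ℤ)) (N : ℤ), F k
      = F 0 + ∑ k ∈ Finset.Icc 1 N, (F (k : ℤ) + F (-(k : ℤ))) := by
  induction N with
  | zero => simp
  | succ N ih =>
      have h1 : Finset.Icc (-((N + 1 : ℕ) : ℤ)) ((N + 1 : ℕ) : ℤ)
          = insert (-((N + 1 : ℕ) : ℤ)) (insert ((N + 1 : ℕ) : ℤ)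
              (Finset.Icc (-(N : ℤ)) (N : ℤ))) := by
        ext k
        simp only [Finset.mem_Icc, Finset.mem_insert]
        push_cast
        omega
      rw [h1, Finset.sum_insert (by simp only [Finset.mem_insert, Finset.mem_Icc]; push_cast; omega),
        Finset.sum_insert (by simp only [Finset.mem_Icc]; push_cast; omega), ih,
        Finset.sum_Icc_succ_top (by omega : 1 ≤ N + 1)]
      push_cast
      ring

lemma orth (M : ℕ) (hM : 0 < M) (n : ℤ) (hn : n.natAbs < M) :
    ∑ j ∈ Finset.Icc 1 M, Complex.exp ((n : ℂ) * (2 * π * Complex.I) * j / M)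
      = if n = 0 then (M : ℂ) else 0 := by
  by_cases h0 : n = 0
  · subst h0
    simp [Nat.card_Icc]
  · rw [if_neg h0]
    set z : ℂ := Complex.exp ((n : ℂ) * (2 * π * Complex.I) / M) with hz
    have hMne : (M : ℂ) ≠ 0 := by exact_mod_cast hM.ne'
    have hterm : ∀ j : ℕ, Complex.exp ((n : ℂ) * (2 * π * Complex.I) * j / M) = z ^ j := by
      intro j
      rw [hz, ← Complex.exp_nat_mul]
      congr 1
      ring
    have hz1 : z ≠ 1 := by
      intro hcon
      rw [hz, Complex.exp_eq_one_iff] at hcon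
      obtain ⟨m, hm⟩ := hcon
      have h2pi : (2 * (π : ℂ) * Complex.I) ≠ 0 := by
        simp [Real.pi_ne_zero, Complex.I_ne_zero, Complex.ofReal_ne_zero]
      have : (n : ℂ) = (m : ℂ) * M := by
        field_simp at hm
        have hm' : (n : ℂ) * (2 * (π : ℂ) * Complex.I)
            = ((m : ℂ) * M) * (2 * (π : ℂ) * Complex.I) := by linear_combination (2 * (π : ℂ) * Complex.I) * hm
        exact mul_right_cancel₀ h2pi hm'
      have hnm : n = m * M := by exact_mod_cast this
      have : m ≠ 0 := by rintro rfl; simp at hnm; exact h0 hnm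
      have : M ≤ n.natAbs := by
        rw [hnm, Int.natAbs_mul]
        simp only [Int.natAbs_cast]
        calc M = 1 * M := (one_mul M).symm
        _ ≤ m.natAbs * M := Nat.mul_le_mul_right M (by omega)
      omega
    have hzM : z ^ M = 1 := by
      rw [hz, ← Complex.exp_nat_mul]
      rw [show (M : ℂ) * ((n : ℂ) * (2 * π * Complex.I) / M) = (n : ℂ) * (2 * π * Complex.I) by
        field_simp]
      exact Complex.exp_int_mul_two_pi_mul_I n
    calc ∑ j ∈ Finset.Icc 1 M, Complex.exp ((n : ℂ) * (2 * π * Complex.I) * j / M)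
        = ∑ j ∈ Finset.Icc 1 M, z ^ j := Finset.sum_congr rfl (fun j _ => hterm j)
      _ = ∑ j ∈ Finset.range M, z ^ (j + 1) := by
          apply Finset.sum_nbij' (fun j => j - 1) (fun j => j + 1) <;>
            intros <;> simp_all [Finset.mem_Icc, Finset.mem_range] <;> omega
      _ = z * ∑ j ∈ Finset.range M, z ^ j := by
          rw [Finset.mul_sum]
          exact Finset.sum_congr rfl (fun j _ => by ring)
      _ = 0 := by rw [geom_sum_eq hz1, hzM]; simp

lemma re_mul_Efun (g : ℕ) (w : ℂ) (k : ℤ) (t : ℝ) :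
    (w * Efun g k t).re
      = w.re * Real.cos ((k : ℝ) * g * t) - w.im * Real.sin ((k : ℝ) * g * t) := by
  have hE : Efun g k t = Complex.exp ((((k : ℝ) * g * t : ℝ) : ℂ) * Complex.I) := by
    rw [Efun]; congr 1; push_cast; ring
  rw [hE, Complex.exp_mul_I]
  simp only [Complex.mul_re, Complex.add_re, Complex.add_im, Complex.mul_im,
    Complex.cos_ofReal_re, Complex.cos_ofReal_im, Complex.sin_ofReal_re, Complex.sin_ofReal_im,
    Complex.I_re, Complex.I_im]
  ring

theorem RMHB_conditional_equivalence (ω₁ ω₂ : ℕ) (hω₁ : 0 < ω₁) (hω₂ : 0 < ω₂)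
    (g : ℕ) (hg : g = Nat.gcd ω₁ ω₂)
    (p φ : ℕ) (hφ : 1 ≤ φ)
    (a b : ℤ × ℤ → ℝ) (x : ℝ → ℝ)
    (hx : ∀ t, x t =
      ∑ mn ∈ (Finset.Icc ((-(p : ℤ), -(p : ℤ))) (((p : ℤ), (p : ℤ)))).filter
          (fun mn => mn.1.natAbs + mn.2.natAbs ≤ p),
        (a mn * Real.cos (((mn.1 : ℝ) * (ω₁ : ℝ) + (mn.2 : ℝ) * (ω₂ : ℝ)) * t) +
         b mn * Real.sin (((mn.1 : ℝ) * (ω₁ : ℝ) + (mn.2 : ℝ) * (ω₂ : ℝ)) * t))) :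
    ∃ c d : ℕ → ℝ,
      (∀ t, (x t) ^ φ = c 0 + ∑ k ∈ Finset.Icc 1 (φ * p * max ω₁ ω₂ / g),
          (c k * Real.cos ((k : ℝ) * (g : ℝ) * t) + d k * Real.sin ((k : ℝ) * (g : ℝ) * t))) ∧
      ∀ M : ℕ, M > (φ + 1) * p * max ω₁ ω₂ / g →
        (c 0 = (1 / (M : ℝ)) * ∑ j ∈ Finset.Icc 1 M,
            (x (2 * π * j / ((g : ℝ) * M))) ^ φ) ∧
        ∀ k, 1 ≤ k → k ≤ p * max ω₁ ω₂ / g →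
          c k = (2 / (M : ℝ)) * ∑ j ∈ Finset.Icc 1 M,
              (x (2 * π * j / ((g : ℝ) * M))) ^ φ * Real.cos ((k : ℝ) * (2 * π * j / M)) ∧
          d k = (2 / (M : ℝ)) * ∑ j ∈ Finset.Icc 1 M,
              (x (2 * π * j / ((g : ℝ) * M))) ^ φ * Real.sin ((k : ℝ) * (2 * π * j / M)) := by
  have hg0 : 0 < g := by
    rw [hg]; exact Nat.gcd_pos_of_pos_left ω₂ hω₁
  set K : ℕ := p * max ω₁ ω₂ / g with hK
  set N' : ℕ := φ * p * max ω₁ ω₂ / g with hN'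
  -- Step 1: x is a trigonometric polynomial of degree ≤ K in the base frequency g
  have hxC : IsTrig g K (fun t => ((x t : ℝ) : ℂ)) := by
    have hterms : ∀ mn ∈ (Finset.Icc ((-(p : ℤ), -(p : ℤ))) (((p : ℤ), (p : ℤ)))).filter
        (fun mn => mn.1.natAbs + mn.2.natAbs ≤ p),
        IsTrig g K (fun t => ((a mn * Real.cos (((mn.1 : ℝ) * (ω₁ : ℝ) + (mn.2 : ℝ) * (ω₂ : ℝ)) * t) +
          b mn * Real.sin (((mn.1 : ℝ) * (ω₁ : ℝ) + (mn.2 : ℝ) * (ω₂ : ℝ)) * t) : ℝ) : ℂ)) := by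
      intro mn hmn
      have habs : mn.1.natAbs + mn.2.natAbs ≤ p := (Finset.mem_filter.1 hmn).2
      set w : ℤ := mn.1 * ω₁ + mn.2 * ω₂ with hw
      have hdvd : (g : ℤ) ∣ w := by
        have h1 : (g : ℤ) ∣ (ω₁ : ℤ) := Int.natCast_dvd_natCast.2 (hg ▸ Nat.gcd_dvd_left ω₁ ω₂)
        have h2 : (g : ℤ) ∣ (ω₂ : ℤ) := Int.natCast_dvd_natCast.2 (hg ▸ Nat.gcd_dvd_right ω₁ ω₂)
        exact dvd_add (Dvd.dvd.mul_left h1 mn.1) (Dvd.dvd.mul_left h2 mn.2)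
      set ℓ : ℤ := w / g with hℓ
      have hℓg : ℓ * g = w := Int.ediv_mul_cancel hdvd
      have hwabs : w.natAbs ≤ p * max ω₁ ω₂ := by
        calc w.natAbs ≤ (mn.1 * ω₁).natAbs + (mn.2 * ω₂).natAbs := Int.natAbs_add_le _ _
          _ = mn.1.natAbs * ω₁ + mn.2.natAbs * ω₂ := by
              rw [Int.natAbs_mul, Int.natAbs_mul]; simp
          _ ≤ mn.1.natAbs * max ω₁ ω₂ + mn.2.natAbs * max ω₁ ω₂ :=
              add_le_add (Nat.mul_le_mul_left _ (le_max_left _ _))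
                (Nat.mul_le_mul_left _ (le_max_right _ _))
          _ = (mn.1.natAbs + mn.2.natAbs) * max ω₁ ω₂ := (add_mul _ _ _).symm
          _ ≤ p * max ω₁ ω₂ := Nat.mul_le_mul_right _ habs
      have hℓabs : ℓ.natAbs ≤ K := by
        rw [hK]
        rw [Nat.le_div_iff_mul_le hg0]
        have h1 : ℓ.natAbs * g = w.natAbs := by
          have := Int.natAbs_mul ℓ (g : ℤ)
          rw [hℓg] at this
          simpa using this.symm
        omega
      have hfreq : ((ℓ : ℂ) * g) = ((mn.1 : ℂ) * ω₁ + (mn.2 : ℂ) * ω₂) := by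
        exact_mod_cast congrArg (fun z : ℤ => (z : ℂ)) hℓg
      refine (isTrig_trig ℓ hℓabs (a mn) (b mn)).congr (fun t => ?_)
      push_cast
      rw [hfreq]
    refine (isTrig_sum _ _ hterms).congr (fun t => ?_)
    rw [hx t]
    push_cast
    rfl
  -- Step 2: x^φ is a trig polynomial of degree ≤ N'
  have hφK : φ * K ≤ N' := by
    rw [hK, hN', mul_assoc]
    exact Nat.mul_div_le_mul_div_assoc _ _ _
  have hKN' : K ≤ N' := by
    rw [hK, hN']
    apply Nat.div_le_div_right
    calc p * max ω₁ ω₂ = 1 * (p * max ω₁ ω₂) := (one_mul _).symm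
      _ ≤ φ * (p * max ω₁ ω₂) := Nat.mul_le_mul_right _ hφ
      _ = φ * p * max ω₁ ω₂ := by ring
  have hpow : IsTrig g N' (fun t => ((x t ^ φ : ℝ) : ℂ)) := by
    refine (((hxC.pow φ).mono hφK).congr (fun t => ?_))
    push_cast
    rfl
  obtain ⟨e, he, hfe0⟩ := hpow
  have hfe : ∀ t : ℝ, ((x t ^ φ : ℝ) : ℂ)
      = ∑ k ∈ Finset.Icc (-(N' : ℤ)) (N' : ℤ), e k * Efun g k t := fun t => hfe0 t
  set c : ℕ → ℝ := fun k => if k = 0 then (e 0).re else (e (k : ℤ) + e (-(k : ℤ))).re with hc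
  set d : ℕ → ℝ := fun k => (e (-(k : ℤ)) - e (k : ℤ)).im with hd
  refine ⟨c, d, ?_, ?_⟩
  · -- representation
    intro t
    have h1 : x t ^ φ = ∑ k ∈ Finset.Icc (-(N' : ℤ)) (N' : ℤ), (e k * Efun g k t).re := by
      have := congrArg Complex.re (hfe t)
      simp only [Complex.re_sum, Complex.ofReal_re] at this
      exact this
    rw [h1, sum_Icc_neg N' (fun k => (e k * Efun g k t).re)]
    congr 1
    · rw [re_mul_Efun]
      simp [hc]
    · apply Finset.sum_congr rfl
      intro k hk
      have hk1 : 1 ≤ k := (Finset.mem_Icc.1 hk).1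
      rw [re_mul_Efun, re_mul_Efun]
      have hneg : ((-(k : ℤ) : ℤ) : ℝ) * g * t = -(((k : ℤ) : ℝ) * g * t) := by
        push_cast; ring
      rw [hneg, Real.cos_neg, Real.sin_neg]
      simp only [hc, hd, if_neg (by omega : ¬ k = 0), Complex.add_re, Complex.sub_im]
      push_cast
      ring
  · intro M hM
    have hM0 : 0 < M := lt_of_le_of_lt (Nat.zero_le _) hM
    have hMR : (M : ℝ) ≠ 0 := Nat.cast_ne_zero.2 hM0.ne'
    have hMC : (M : ℂ) ≠ 0 := Nat.cast_ne_zero.2 hM0.ne'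
    have hgC : (g : ℂ) ≠ 0 := Nat.cast_ne_zero.2 hg0.ne'
    have hbound : N' + K < M := by
      have h1 : N' * g ≤ φ * p * max ω₁ ω₂ := by rw [hN']; exact Nat.div_mul_le_self _ _
      have h2 : K * g ≤ p * max ω₁ ω₂ := by rw [hK]; exact Nat.div_mul_le_self _ _
      have h3 : N' + K ≤ (φ + 1) * p * max ω₁ ω₂ / g := by
        rw [Nat.le_div_iff_mul_le hg0, add_mul]
        have h4 : (φ + 1) * p * max ω₁ ω₂ = φ * p * max ω₁ ω₂ + p * max ω₁ ω₂ := by ring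
        omega
      omega
    have hsample : ∀ j : ℕ, ((x (2 * π * j / ((g : ℝ) * M)) ^ φ : ℝ) : ℂ)
        = ∑ k ∈ Finset.Icc (-(N' : ℤ)) (N' : ℤ),
            e k * Complex.exp ((k : ℂ) * (2 * π * Complex.I) * j / M) := by
      intro j
      rw [hfe]
      refine Finset.sum_congr rfl (fun k _ => ?_)
      congr 1
      rw [Efun]
      congr 1
      push_cast
      field_simp
    have hdft : ∀ k' : ℤ, k'.natAbs ≤ K →
        (M : ℂ) * e k' = ∑ j ∈ Finset.Icc 1 M, ((x (2 * π * j / ((g : ℝ) * M)) ^ φ : ℝ) : ℂ)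
          * Complex.exp ((-k' : ℂ) * (2 * π * Complex.I) * j / M) := by
      intro k' hk'
      have step1 : ∑ j ∈ Finset.Icc 1 M, ((x (2 * π * j / ((g : ℝ) * M)) ^ φ : ℝ) : ℂ)
            * Complex.exp ((-k' : ℂ) * (2 * π * Complex.I) * j / M)
          = ∑ j ∈ Finset.Icc 1 M, ∑ k ∈ Finset.Icc (-(N' : ℤ)) (N' : ℤ),
              e k * Complex.exp (((k - k' : ℤ) : ℂ) * (2 * π * Complex.I) * j / M) := by
        refine Finset.sum_congr rfl (fun j _ => ?_)
        rw [hsample j, Finset.sum_mul]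
        refine Finset.sum_congr rfl (fun k _ => ?_)
        rw [mul_assoc]
        congr 1
        rw [← Complex.exp_add]
        congr 1
        push_cast
        ring
      rw [step1, Finset.sum_comm]
      have step2 : ∀ k ∈ Finset.Icc (-(N' : ℤ)) (N' : ℤ),
          ∑ j ∈ Finset.Icc 1 M,
              e k * Complex.exp (((k - k' : ℤ) : ℂ) * (2 * π * Complex.I) * j / M)
            = if k = k' then e k * M else 0 := by
        intro k hk
        simp only [Finset.mem_Icc] at hk
        rw [← Finset.mul_sum, orth M hM0 (k - k') (by omega)]
        by_cases h : k = k'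
        · simp [h]
        · rw [if_neg (sub_ne_zero.2 h), if_neg h, mul_zero]
      rw [Finset.sum_congr rfl step2]
      have hk'mem : k' ∈ Finset.Icc (-(N' : ℤ)) (N' : ℤ) := by
        simp only [Finset.mem_Icc]
        omega
      rw [Finset.sum_ite_eq' _ k' (fun k => e k * (M : ℂ)), if_pos hk'mem]
      ring
    constructor
    · have h0 := hdft 0 (by simp)
      have h0' : (M : ℂ) * e 0 = ∑ j ∈ Finset.Icc 1 M,
          ((x (2 * π * j / ((g : ℝ) * M)) ^ φ : ℝ) : ℂ) := by
        rw [h0]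
        refine Finset.sum_congr rfl (fun j _ => ?_)
        simp
      have hre := congrArg Complex.re h0'
      simp only [Complex.re_sum, Complex.ofReal_re, Complex.mul_re, Complex.natCast_re,
        Complex.natCast_im, zero_mul, sub_zero] at hre
      simp only [hc, if_pos rfl]
      rw [div_mul_eq_mul_div, eq_div_iff hMR]
      linarith [hre]
    · intro k hk1 hk2
      have hkK : (k : ℤ).natAbs ≤ K := by simpa using hk2
      have hmkK : (-(k : ℤ)).natAbs ≤ K := by simpa using hk2
      have hargm : ∀ j : ℕ, (-((k : ℕ) : ℤ) : ℂ) * (2 * π * Complex.I) * j / M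
          = ((-((k : ℝ) * (2 * π * j / M)) : ℝ) : ℂ) * Complex.I := by
        intro j; push_cast; ring
      have hargp : ∀ j : ℕ, (-(((-(k : ℤ)) : ℤ) : ℂ)) * (2 * π * Complex.I) * j / M
          = (((k : ℝ) * (2 * π * j / M) : ℝ) : ℂ) * Complex.I := by
        intro j; push_cast; ring
      have hp := hdft (k : ℤ) hkK
      have hm := hdft (-(k : ℤ)) hmkK
      rw [Finset.sum_congr rfl (fun j _ => by rw [hargm j] :
        ∀ j ∈ Finset.Icc 1 M, ((x (2 * π * j / ((g : ℝ) * M)) ^ φ : ℝ) : ℂ)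
            * Complex.exp ((-((k : ℕ) : ℤ) : ℂ) * (2 * π * Complex.I) * j / M)
          = ((x (2 * π * j / ((g : ℝ) * M)) ^ φ : ℝ) : ℂ)
            * Complex.exp (((-((k : ℝ) * (2 * π * j / M)) : ℝ) : ℂ) * Complex.I))] at hp
      rw [Finset.sum_congr rfl (fun j _ => by rw [hargp j] :
        ∀ j ∈ Finset.Icc 1 M, ((x (2 * π * j / ((g : ℝ) * M)) ^ φ : ℝ) : ℂ)
            * Complex.exp ((-(((-(k : ℤ)) : ℤ) : ℂ)) * (2 * π * Complex.I) * j / M)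
          = ((x (2 * π * j / ((g : ℝ) * M)) ^ φ : ℝ) : ℂ)
            * Complex.exp ((((k : ℝ) * (2 * π * j / M) : ℝ) : ℂ) * Complex.I))] at hm
      have hpre := congrArg Complex.re hp
      have hpim := congrArg Complex.im hp
      have hmre := congrArg Complex.re hm
      have hmim := congrArg Complex.im hm
      simp only [Complex.re_sum, Complex.im_sum, Complex.mul_re, Complex.mul_im,
        Complex.natCast_re, Complex.natCast_im, Complex.ofReal_re, Complex.ofReal_im,
        Complex.exp_ofReal_mul_I_re, Complex.exp_ofReal_mul_I_im,
        Real.cos_neg, Real.sin_neg, zero_mul, sub_zero, add_zero, mul_zero, zero_add,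
        mul_neg, neg_zero, zero_sub] at hpre hpim hmre hmim
      constructor
      · simp only [hc, if_neg (by omega : ¬ k = 0), Complex.add_re]
        rw [div_mul_eq_mul_div, eq_div_iff hMR]
        linarith [hpre, hmre]
      · rw [Finset.sum_neg_distrib] at hpim
        simp only [hd, Complex.sub_im]
        rw [div_mul_eq_mul_div, eq_div_iff hMR]
        linarith [hpim, hmim]
end

section
/- Let x(t) = x₀ + Σ_{n=1}^{2}(x_{2n−1}cos(nωt) + x_{2n}sin(nωt)) be a trigonometric polynomial of degree 2. Then x³ is a trigonometric polynomial of degree 6, and when x³ is sampled at M = 5 equally spaced points per period, the computed discrete Fourier constant term differs from the true constant term of x³ by (3/4)(x₃² − x₄²)x₁ − (3/2)x₂x₃x₄ (the aliasing contamination of the 5th harmonic onto the constant term). -/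
open Real Finset intervalIntegral

set_option maxHeartbeats 1600000 in
theorem HDHB_aliasing_N2 (x₀ x₁ x₂ x₃ x₄ : ℝ) (x : ℝ → ℝ)
    (hx : ∀ t, x t = x₀ + x₁ * Real.cos t + x₂ * Real.sin t +
        x₃ * Real.cos (2 * t) + x₄ * Real.sin (2 * t)) :
    (∃ c d : ℕ → ℝ, ∀ t, (x t) ^ 3 = c 0 + ∑ n ∈ Finset.Icc 1 6,
        (c n * Real.cos (n * t) + d n * Real.sin (n * t))) ∧
    (1 / (5 : ℝ)) * ∑ j ∈ Finset.Icc (1 : ℕ) 5, (x (2 * π * (j : ℝ) / 5)) ^ 3 -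
        (1 / (2 * π)) * ∫ θ in (0 : ℝ)..(2 * π), (x θ) ^ 3 =
      (3 / 4) * (x₃ ^ 2 - x₄ ^ 2) * x₁ - (3 / 2) * x₂ * x₃ * x₄ := by
  have hkey : ∀ t : ℝ, x t ^ 3 = ((-3/4:ℝ)*x₂^2*x₃ + (3/2:ℝ)*x₁*x₂*x₄ + (3/4:ℝ)*x₁^2*x₃ + (3/2:ℝ)*x₀*x₄^2 + (3/2:ℝ)*x₀*x₃^2 + (3/2:ℝ)*x₀*x₂^2 + (3/2:ℝ)*x₀*x₁^2 + (1:ℝ)*x₀^3) + (((3/2:ℝ)*x₁*x₄^2 + (3/2:ℝ)*x₁*x₃^2 + (3/4:ℝ)*x₁*x₂^2 + (3/4:ℝ)*x₁^3 + (3:ℝ)*x₀*x₂*x₄ + (3:ℝ)*x₀*x₁*x₃ + (3:ℝ)*x₀^2*x₁) * Real.cos t + ((3/2:ℝ)*x₂*x₄^2 + (3/2:ℝ)*x₂*x₃^2 + (3/4:ℝ)*x₂^3 + (3/4:ℝ)*x₁^2*x₂ + (-3:ℝ)*x₀*x₂*x₃ + (3:ℝ)*x₀*x₁*x₄ + (3:ℝ)*x₀^2*x₂)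 * Real.sin t) + (((3/4:ℝ)*x₃*x₄^2 + (3/4:ℝ)*x₃^3 + (3/2:ℝ)*x₂^2*x₃ + (3/2:ℝ)*x₁^2*x₃ + (-3/2:ℝ)*x₀*x₂^2 + (3/2:ℝ)*x₀*x₁^2 + (3:ℝ)*x₀^2*x₃) * Real.cos (2 * t) + ((3/4:ℝ)*x₄^3 + (3/4:ℝ)*x₃^2*x₄ + (3/2:ℝ)*x₂^2*x₄ + (3/2:ℝ)*x₁^2*x₄ + (3:ℝ)*x₀*x₁*x₂ + (3:ℝ)*x₀^2*x₄) * Real.sin (2 * t)) + (((3/2:ℝ)*x₂*x₃*x₄ + (-3/4:ℝ)*x₁*x₄^2 + (3/4:ℝ)*x₁*x₃^2 + (-3/4:ℝ)*x₁*x₂^2 + (1/4:ℝ)*x₁^3 + (-3:ℝ)*x₀*x₂*x₄ + (3:ℝ)*x₀*x₁*x₃) * Real.cos (3 * t) + ((3/4:ℝ)*x₂*x₄^2 + (-3/4:ℝ)*x₂*x₃^2 + (-1/4:ℝ)*x₂^3 + (3/2:ℝ)*x₁*x₃*x₄ + (3/4:ℝ)*x₁^2*x₂ + (3:ℝ)*x₀*x₂*x₃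 + (3:ℝ)*x₀*x₁*x₄) * Real.sin (3 * t)) + (((-3/4:ℝ)*x₂^2*x₃ + (-3/2:ℝ)*x₁*x₂*x₄ + (3/4:ℝ)*x₁^2*x₃ + (-3/2:ℝ)*x₀*x₄^2 + (3/2:ℝ)*x₀*x₃^2) * Real.cos (4 * t) + ((-3/4:ℝ)*x₂^2*x₄ + (3/2:ℝ)*x₁*x₂*x₃ + (3/4:ℝ)*x₁^2*x₄ + (3:ℝ)*x₀*x₃*x₄) * Real.sin (4 * t)) + (((-3/2:ℝ)*x₂*x₃*x₄ + (-3/4:ℝ)*x₁*x₄^2 + (3/4:ℝ)*x₁*x₃^2) * Real.cos (5 * t) + ((-3/4:ℝ)*x₂*x₄^2 + (3/4:ℝ)*x₂*x₃^2 + (3/2:ℝ)*x₁*x₃*x₄) * Real.sin (5 * t)) + (((-3/4:ℝ)*x₃*x₄^2 + (1/4:ℝ)*x₃^3) * Real.cos (6 * t) + ((-1/4:ℝ)*x₄^3 + (3/4:ℝ)*x₃^2*x₄) * Real.sin (6 * t)) := by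
    intro t
    rw [hx]
    rw [show (6:ℝ)*t = 5*t+t by ring, show (5:ℝ)*t = 4*t+t by ring,
        show (4:ℝ)*t = 3*t+t by ring, show (3:ℝ)*t = 2*t+t by ring]
    simp only [Real.cos_add, Real.sin_add, Real.cos_two_mul, Real.sin_two_mul]
    linear_combination ((3/2:ℝ)*x₄^3*Real.cos t*Real.sin t + (1/2:ℝ)*x₄^3*Real.cos t*Real.sin t^3 + (5/2:ℝ)*x₄^3*Real.cos t^3*Real.sin t + (-3/4:ℝ)*x₃*x₄^2 + (-3/4:ℝ)*x₃*x₄^2*Real.sin t^2 + (3/4:ℝ)*x₃*x₄^2*Real.cos t^2 + (15/2:ℝ)*x₃*x₄^2*Real.cos t^2*Real.sin t^2 + (3/2:ℝ)*x₃*x₄^2*Real.cos t^4 + (-9/2:ℝ)*x₃^2*x₄*Real.cos t*Real.sin t + (-3/2:ℝ)*x₃^2*x₄*Real.cos t*Real.sin t^3 + (33/2:ℝ)*x₃^2*x₄*Real.cos t^3*Real.sin t + (1/4:ℝ)*x₃^3 + (1/4:ℝ)*x₃^3*Real.sin t^2 + (-17/4:ℝ)*x₃^3*Real.cos t^2 +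 (-5/2:ℝ)*x₃^3*Real.cos t^2*Real.sin t^2 + (15/2:ℝ)*x₃^3*Real.cos t^4 + (3/4:ℝ)*x₂*x₄^2*Real.sin t + (6:ℝ)*x₂*x₄^2*Real.cos t^2*Real.sin t + (-3/2:ℝ)*x₂*x₃*x₄*Real.cos t + (3:ℝ)*x₂*x₃*x₄*Real.cos t*Real.sin t^2 + (3:ℝ)*x₂*x₃*x₄*Real.cos t^3 + (-3/4:ℝ)*x₂*x₃^2*Real.sin t + (6:ℝ)*x₂*x₃^2*Real.cos t^2*Real.sin t + (9/2:ℝ)*x₂^2*x₄*Real.cos t*Real.sin t + (-9/4:ℝ)*x₂^2*x₃ + (3/2:ℝ)*x₂^2*x₃*Real.cos t^2 + (1:ℝ)*x₂^3*Real.sin t + (9/4:ℝ)*x₁*x₄^2*Real.cos t + (3/2:ℝ)*x₁*x₄^2*Real.cos t*Real.sin t^2 + (3/2:ℝ)*x₁*x₄^2*Real.cos t^3 + (-3/2:ℝ)*x₁*x₃*x₄*Real.sin t + (12:ℝ)*x₁*x₃*x₄*Real.cos t^2*Real.sin t + (-9/4:ℝ)*x₁*x₃^2*Real.cos t + (-3/2:ℝ)*x₁*x₃^2*Real.cos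 t*Real.sin t^2 + (21/2:ℝ)*x₁*x₃^2*Real.cos t^3 + (3/2:ℝ)*x₁*x₂*x₄ + (3:ℝ)*x₁*x₂*x₄*Real.cos t^2 + (3:ℝ)*x₁*x₂*x₃*Real.cos t*Real.sin t + (3/2:ℝ)*x₁*x₂^2*Real.cos t + (3/2:ℝ)*x₁^2*x₄*Real.cos t*Real.sin t + (-3/4:ℝ)*x₁^2*x₃ + (9/2:ℝ)*x₁^2*x₃*Real.cos t^2 + (1/2:ℝ)*x₁^3*Real.cos t + (3/2:ℝ)*x₀*x₄^2 + (3:ℝ)*x₀*x₄^2*Real.cos t^2 + (6:ℝ)*x₀*x₃*x₄*Real.cos t*Real.sin t + (-3/2:ℝ)*x₀*x₃^2 + (9:ℝ)*x₀*x₃^2*Real.cos t^2 + (6:ℝ)*x₀*x₂*x₄*Real.cos t + (3:ℝ)*x₀*x₂^2 + (6:ℝ)*x₀*x₁*x₃*Real.cos t) * (Real.sin_sq_add_cos_sq t)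
  constructor
  · refine ⟨fun n => if n = 0 then ((-3/4:ℝ)*x₂^2*x₃ + (3/2:ℝ)*x₁*x₂*x₄ + (3/4:ℝ)*x₁^2*x₃ + (3/2:ℝ)*x₀*x₄^2 + (3/2:ℝ)*x₀*x₃^2 + (3/2:ℝ)*x₀*x₂^2 + (3/2:ℝ)*x₀*x₁^2 + (1:ℝ)*x₀^3) else if n = 1 then ((3/2:ℝ)*x₁*x₄^2 + (3/2:ℝ)*x₁*x₃^2 + (3/4:ℝ)*x₁*x₂^2 + (3/4:ℝ)*x₁^3 + (3:ℝ)*x₀*x₂*x₄ + (3:ℝ)*x₀*x₁*x₃ + (3:ℝ)*x₀^2*x₁) else if n = 2 then ((3/4:ℝ)*x₃*x₄^2 + (3/4:ℝ)*x₃^3 + (3/2:ℝ)*x₂^2*x₃ + (3/2:ℝ)*x₁^2*x₃ + (-3/2:ℝ)*x₀*x₂^2 + (3/2:ℝ)*x₀*x₁^2 + (3:ℝ)*x₀^2*x₃) else if n = 3 then ((3/2:ℝ)*x₂*x₃*x₄ + (-3/4:ℝ)*x₁*x₄^2 + (3/4:ℝ)*x₁*x₃^2 + (-3/4:ℝ)*x₁*x₂^2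 + (1/4:ℝ)*x₁^3 + (-3:ℝ)*x₀*x₂*x₄ + (3:ℝ)*x₀*x₁*x₃) else if n = 4 then ((-3/4:ℝ)*x₂^2*x₃ + (-3/2:ℝ)*x₁*x₂*x₄ + (3/4:ℝ)*x₁^2*x₃ + (-3/2:ℝ)*x₀*x₄^2 + (3/2:ℝ)*x₀*x₃^2) else if n = 5 then ((-3/2:ℝ)*x₂*x₃*x₄ + (-3/4:ℝ)*x₁*x₄^2 + (3/4:ℝ)*x₁*x₃^2) else if n = 6 then ((-3/4:ℝ)*x₃*x₄^2 + (1/4:ℝ)*x₃^3) else 0, fun n => if n = 1 then ((3/2:ℝ)*x₂*x₄^2 + (3/2:ℝ)*x₂*x₃^2 + (3/4:ℝ)*x₂^3 + (3/4:ℝ)*x₁^2*x₂ + (-3:ℝ)*x₀*x₂*x₃ + (3:ℝ)*x₀*x₁*x₄ + (3:ℝ)*x₀^2*x₂) else if n = 2 then ((3/4:ℝ)*x₄^3 + (3/4:ℝ)*x₃^2*x₄ + (3/2:ℝ)*x₂^2*x₄ + (3/2:ℝ)*x₁^2*x₄ + (3:ℝ)*x₀*x₁*x₂ + (3:ℝ)*x₀^2*x₄)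 else if n = 3 then ((3/4:ℝ)*x₂*x₄^2 + (-3/4:ℝ)*x₂*x₃^2 + (-1/4:ℝ)*x₂^3 + (3/2:ℝ)*x₁*x₃*x₄ + (3/4:ℝ)*x₁^2*x₂ + (3:ℝ)*x₀*x₂*x₃ + (3:ℝ)*x₀*x₁*x₄) else if n = 4 then ((-3/4:ℝ)*x₂^2*x₄ + (3/2:ℝ)*x₁*x₂*x₃ + (3/4:ℝ)*x₁^2*x₄ + (3:ℝ)*x₀*x₃*x₄) else if n = 5 then ((-3/4:ℝ)*x₂*x₄^2 + (3/4:ℝ)*x₂*x₃^2 + (3/2:ℝ)*x₁*x₃*x₄) else if n = 6 then ((-1/4:ℝ)*x₄^3 + (3/4:ℝ)*x₃^2*x₄) else 0, fun t => ?_⟩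
    rw [show Finset.Icc (1:ℕ) 6 = {1,2,3,4,5,6} by decide]
    rw [Finset.sum_insert (by decide), Finset.sum_insert (by decide),
        Finset.sum_insert (by decide), Finset.sum_insert (by decide),
        Finset.sum_insert (by decide), Finset.sum_singleton]
    push_cast
    norm_num
    rw [hkey t]
    ring
  · have _dummy : True := trivial
    obtain ⟨a0, a1, b1, a2, b2, a3, b3, a4, b4, a5, b5, a6, b6, hk, ha5⟩ :
        ∃ a0 a1 b1 a2 b2 a3 b3 a4 b4 a5 b5 a6 b6 : ℝ,
          (∀ t : ℝ, x t ^ 3 = a0 + (a1 * Real.cos t + b1 * Real.sin t) + (a2 * Real.cos (2 * t) + b2 * Real.sin (2 * t)) + (a3 * Real.cos (3 * t) + b3 * Real.sin (3 * t)) + (a4 * Real.cos (4 * t) + b4 * Real.sin (4 * t)) + (a5 * Real.cos (5 * t) + b5 * Real.sin (5 * t)) + (a6 * Real.cos (6 * t) + b6 * Real.sin (6 * t))) ∧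
          a5 = (3 / 4) * (x₃ ^ 2 - x₄ ^ 2) * x₁ - (3 / 2) * x₂ * x₃ * x₄ :=
      ⟨((-3/4:ℝ)*x₂^2*x₃ + (3/2:ℝ)*x₁*x₂*x₄ + (3/4:ℝ)*x₁^2*x₃ + (3/2:ℝ)*x₀*x₄^2 + (3/2:ℝ)*x₀*x₃^2 + (3/2:ℝ)*x₀*x₂^2 + (3/2:ℝ)*x₀*x₁^2 + (1:ℝ)*x₀^3), ((3/2:ℝ)*x₁*x₄^2 + (3/2:ℝ)*x₁*x₃^2 + (3/4:ℝ)*x₁*x₂^2 + (3/4:ℝ)*x₁^3 + (3:ℝ)*x₀*x₂*x₄ + (3:ℝ)*x₀*x₁*x₃ + (3:ℝ)*x₀^2*x₁), ((3/2:ℝ)*x₂*x₄^2 + (3/2:ℝ)*x₂*x₃^2 + (3/4:ℝ)*x₂^3 + (3/4:ℝ)*x₁^2*x₂ + (-3:ℝ)*x₀*x₂*x₃ + (3:ℝ)*x₀*x₁*x₄ + (3:ℝ)*x₀^2*x₂), ((3/4:ℝ)*x₃*x₄^2 + (3/4:ℝ)*x₃^3 + (3/2:ℝ)*x₂^2*x₃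 + (3/2:ℝ)*x₁^2*x₃ + (-3/2:ℝ)*x₀*x₂^2 + (3/2:ℝ)*x₀*x₁^2 + (3:ℝ)*x₀^2*x₃), ((3/4:ℝ)*x₄^3 + (3/4:ℝ)*x₃^2*x₄ + (3/2:ℝ)*x₂^2*x₄ + (3/2:ℝ)*x₁^2*x₄ + (3:ℝ)*x₀*x₁*x₂ + (3:ℝ)*x₀^2*x₄), ((3/2:ℝ)*x₂*x₃*x₄ + (-3/4:ℝ)*x₁*x₄^2 + (3/4:ℝ)*x₁*x₃^2 + (-3/4:ℝ)*x₁*x₂^2 + (1/4:ℝ)*x₁^3 + (-3:ℝ)*x₀*x₂*x₄ + (3:ℝ)*x₀*x₁*x₃), ((3/4:ℝ)*x₂*x₄^2 + (-3/4:ℝ)*x₂*x₃^2 + (-1/4:ℝ)*x₂^3 + (3/2:ℝ)*x₁*x₃*x₄ + (3/4:ℝ)*x₁^2*x₂ + (3:ℝ)*x₀*x₂*x₃ + (3:ℝ)*x₀*x₁*x₄), ((-3/4:ℝ)*x₂^2*x₃ + (-3/2:ℝ)*x₁*x₂*x₄ + (3/4:ℝ)*x₁^2*x₃ + (-3/2:ℝ)*x₀*x₄^2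 + (3/2:ℝ)*x₀*x₃^2), ((-3/4:ℝ)*x₂^2*x₄ + (3/2:ℝ)*x₁*x₂*x₃ + (3/4:ℝ)*x₁^2*x₄ + (3:ℝ)*x₀*x₃*x₄), ((-3/2:ℝ)*x₂*x₃*x₄ + (-3/4:ℝ)*x₁*x₄^2 + (3/4:ℝ)*x₁*x₃^2), ((-3/4:ℝ)*x₂*x₄^2 + (3/4:ℝ)*x₂*x₃^2 + (3/2:ℝ)*x₁*x₃*x₄), ((-3/4:ℝ)*x₃*x₄^2 + (1/4:ℝ)*x₃^3), ((-1/4:ℝ)*x₄^3 + (3/4:ℝ)*x₃^2*x₄), hkey, by ring⟩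
    have unit : ∀ r : ℝ, Complex.exp ((r:ℂ) * Complex.I) ≠ 1 →
        Complex.exp (((5*r : ℝ):ℂ) * Complex.I) = 1 →
        (Real.cos r + Real.cos (2*r) + Real.cos (3*r) + Real.cos (4*r) + Real.cos (5*r) = 0 ∧
         Real.sin r + Real.sin (2*r) + Real.sin (3*r) + Real.sin (4*r) + Real.sin (5*r) = 0) := by
      intro r h1 h5
      have hzk : ∀ k : ℕ, Complex.exp ((r:ℂ) * Complex.I) ^ k
          = Complex.exp ((((k:ℝ)*r : ℝ):ℂ) * Complex.I) := by
        intro k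
        rw [← Complex.exp_nat_mul]
        congr 1
        push_cast
        ring
      have hz5 : Complex.exp ((r:ℂ) * Complex.I) ^ 5 = 1 := by
        rw [hzk 5, show ((((5:ℕ):ℝ)*r : ℝ):ℂ) = (((5*r : ℝ)):ℂ) by push_cast; ring]
        exact h5
      have hz1 : Complex.exp ((r:ℂ) * Complex.I) - 1 ≠ 0 := sub_ne_zero.mpr h1
      have hS : Complex.exp ((r:ℂ) * Complex.I) ^ 1 + Complex.exp ((r:ℂ) * Complex.I) ^ 2
          + Complex.exp ((r:ℂ) * Complex.I) ^ 3 + Complex.exp ((r:ℂ) * Complex.I) ^ 4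
          + Complex.exp ((r:ℂ) * Complex.I) ^ 5 = 0 := by
        rcases mul_eq_zero.mp (show (Complex.exp ((r:ℂ) * Complex.I) - 1) *
            (Complex.exp ((r:ℂ) * Complex.I) ^ 1 + Complex.exp ((r:ℂ) * Complex.I) ^ 2
            + Complex.exp ((r:ℂ) * Complex.I) ^ 3 + Complex.exp ((r:ℂ) * Complex.I) ^ 4
            + Complex.exp ((r:ℂ) * Complex.I) ^ 5) = 0 by
          linear_combination Complex.exp ((r:ℂ) * Complex.I) * hz5) with h | h
        · exact absurd h hz1
        · exact h
      have hre := congrArg Complex.re hS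
      have him := congrArg Complex.im hS
      simp only [hzk, Complex.add_re, Complex.add_im, Complex.zero_re, Complex.zero_im,
        Complex.exp_ofReal_mul_I_re, Complex.exp_ofReal_mul_I_im] at hre him
      push_cast at hre him
      norm_num at hre him
      exact ⟨by linarith, by linarith⟩
    have hne : ∀ n : ℕ, ¬((5:ℤ) ∣ (n:ℤ)) →
        Complex.exp (((2*π*(n:ℝ)/5 : ℝ):ℂ) * Complex.I) ≠ 1 := by
      intro n hn h
      rw [Complex.exp_eq_one_iff] at h
      obtain ⟨k, hk⟩ := h
      have h2 : ((2*π*(n:ℝ)/5 : ℝ):ℂ) = (k:ℂ) * (2*(π:ℂ)) :=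
        mul_right_cancel₀ Complex.I_ne_zero (by rw [hk]; ring)
      have h3 : (2*π*(n:ℝ)/5 : ℝ) = (k:ℝ) * (2*π) := by exact_mod_cast h2
      have h4 : (n:ℝ) = 5*(k:ℝ) := by
        have h2π : (2*π) ≠ 0 := by positivity
        apply mul_left_cancel₀ h2π
        linear_combination 5 * h3
      exact hn ⟨k, by exact_mod_cast h4⟩
    have h5e : ∀ n : ℕ, Complex.exp (((5*(2*π*(n:ℝ)/5) : ℝ):ℂ) * Complex.I) = 1 := by
      intro n
      rw [← Complex.exp_int_mul_two_pi_mul_I (n:ℤ)]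
      congr 1
      push_cast
      ring
    obtain ⟨h1c, h1s⟩ := unit (2*π*((1:ℕ):ℝ)/5) (hne 1 (by decide)) (h5e 1)
    obtain ⟨h2c, h2s⟩ := unit (2*π*((2:ℕ):ℝ)/5) (hne 2 (by decide)) (h5e 2)
    obtain ⟨h3c, h3s⟩ := unit (2*π*((3:ℕ):ℝ)/5) (hne 3 (by decide)) (h5e 3)
    obtain ⟨h4c, h4s⟩ := unit (2*π*((4:ℕ):ℝ)/5) (hne 4 (by decide)) (h5e 4)
    obtain ⟨h6c, h6s⟩ := unit (2*π*((6:ℕ):ℝ)/5) (hne 6 (by decide)) (h5e 6)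
    push_cast at h1c h1s h2c h2s h3c h3s h4c h4s h6c h6s
    have hEc : ∀ j : ℕ, Real.cos ((j:ℝ) * (2*π)) = 1 := Real.cos_nat_mul_two_pi
    have hEs : ∀ j : ℕ, Real.sin ((j:ℝ) * (2*π)) = 0 := by
      intro j
      have h := Real.sin_nat_mul_pi (2*j)
      push_cast at h
      rw [show ((j:ℝ)*(2*π)) = 2*(j:ℝ)*π by ring]
      exact h
    have E1 := hEc 1; have E2 := hEc 2; have E3 := hEc 3; have E4 := hEc 4; have E5 := hEc 5
    have F1 := hEs 1; have F2 := hEs 2; have F3 := hEs 3; have F4 := hEs 4; have F5 := hEs 5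
    push_cast at E1 E2 E3 E4 E5 F1 F2 F3 F4 F5
    have hxc : Continuous fun θ : ℝ => x θ ^ 3 := by
      have hxe : x = fun t => x₀ + x₁ * Real.cos t + x₂ * Real.sin t +
          x₃ * Real.cos (2 * t) + x₄ * Real.sin (2 * t) := funext hx
      rw [hxe]
      fun_prop
    have hInt : IntervalIntegrable (fun θ : ℝ => x θ ^ 3) MeasureTheory.volume 0 (2*π) :=
      hxc.intervalIntegrable 0 (2*π)
    have hsin : ∀ (k θ : ℝ), HasDerivAt (fun u : ℝ => Real.sin (k*u)) (k * Real.cos (k*θ)) θ := by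
      intro k θ
      have h1 : HasDerivAt (fun u : ℝ => k*u) k θ := by
        simpa using (hasDerivAt_id θ).const_mul k
      exact ((Real.hasDerivAt_sin (k*θ)).comp θ h1).congr_deriv (by ring)
    have hcos : ∀ (k θ : ℝ), HasDerivAt (fun u : ℝ => Real.cos (k*u)) (-(k * Real.sin (k*θ))) θ := by
      intro k θ
      have h1 : HasDerivAt (fun u : ℝ => k*u) k θ := by
        simpa using (hasDerivAt_id θ).const_mul k
      exact ((Real.hasDerivAt_cos (k*θ)).comp θ h1).congr_deriv (by ring)
    have hterm : ∀ (k : ℝ), k ≠ 0 → ∀ (a b θ : ℝ),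
        HasDerivAt (fun u : ℝ => a/k * Real.sin (k*u) - b/k * Real.cos (k*u))
          (a * Real.cos (k*θ) + b * Real.sin (k*θ)) θ := by
      intro k hk a b θ
      have h := ((hsin k θ).const_mul (a/k)).sub ((hcos k θ).const_mul (b/k))
      exact h.congr_deriv (by
        linear_combination Real.cos (k*θ) * div_mul_cancel₀ a hk + Real.sin (k*θ) * div_mul_cancel₀ b hk)
    have hterm1 : ∀ (a b θ : ℝ),
        HasDerivAt (fun u : ℝ => a * Real.sin u - b * Real.cos u)
          (a * Real.cos θ + b * Real.sin θ) θ := by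
      intro a b θ
      have h := ((Real.hasDerivAt_sin θ).const_mul a).sub ((Real.hasDerivAt_cos θ).const_mul b)
      exact h.congr_deriv (by ring)
    have hlin : ∀ (a θ : ℝ), HasDerivAt (fun u : ℝ => a*u) a θ := by
      intro a θ
      simpa using (hasDerivAt_id θ).const_mul a
    have hF : ∀ θ ∈ Set.uIcc (0:ℝ) (2*π),
        HasDerivAt (fun u : ℝ => a0 * u + (a1 * Real.sin u - b1 * Real.cos u) + (a2 / 2 * Real.sin (2 * u) - b2 / 2 * Real.cos (2 * u)) + (a3 / 3 * Real.sin (3 * u) - b3 / 3 * Real.cos (3 * u)) + (a4 / 4 * Real.sin (4 * u) - b4 / 4 * Real.cos (4 * u)) + (a5 / 5 * Real.sin (5 * u) - b5 / 5 * Real.cos (5 * u)) + (a6 / 6 * Real.sin (6 * u) - b6 / 6 * Real.cos (6 * u))) (x θ ^ 3) θ := by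
      intro θ _
      rw [hk θ]
      exact (((((((hlin a0 θ).add (hterm1 a1 b1 θ)).add
        (hterm 2 two_ne_zero a2 b2 θ)).add
        (hterm 3 three_ne_zero a3 b3 θ)).add
        (hterm 4 four_ne_zero a4 b4 θ)).add
        (hterm 5 (by norm_num) a5 b5 θ)).add
        (hterm 6 (by norm_num) a6 b6 θ))
    have hintval : (∫ θ in (0:ℝ)..(2*π), x θ ^ 3) = 2*π*a0 := by
      rw [intervalIntegral.integral_eq_sub_of_hasDerivAt hF hInt]
      have c2 : Real.cos (2*(2*π)) = 1 := by have h := Real.cos_nat_mul_two_pi 2; push_cast at h; exact h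
      have c3 : Real.cos (3*(2*π)) = 1 := by have h := Real.cos_nat_mul_two_pi 3; push_cast at h; exact h
      have c4 : Real.cos (4*(2*π)) = 1 := by have h := Real.cos_nat_mul_two_pi 4; push_cast at h; exact h
      have c5 : Real.cos (5*(2*π)) = 1 := by have h := Real.cos_nat_mul_two_pi 5; push_cast at h; exact h
      have c6 : Real.cos (6*(2*π)) = 1 := by have h := Real.cos_nat_mul_two_pi 6; push_cast at h; exact h
      have s2 : Real.sin (2*(2*π)) = 0 := by have h := hEs 2; push_cast at h; exact h
      have s3 : Real.sin (3*(2*π)) = 0 := by have h := hEs 3; push_cast at h; exact h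
      have s4 : Real.sin (4*(2*π)) = 0 := by have h := hEs 4; push_cast at h; exact h
      have s5 : Real.sin (5*(2*π)) = 0 := by have h := hEs 5; push_cast at h; exact h
      have s6 : Real.sin (6*(2*π)) = 0 := by have h := hEs 6; push_cast at h; exact h
      simp only [Real.cos_two_pi, Real.sin_two_pi, c2, c3, c4, c5, c6, s2, s3, s4, s5, s6,
        mul_zero, Real.sin_zero, Real.cos_zero, mul_one]
      ring
    rw [hintval]
    rw [show 1/(2*π) * (2*π*a0) = a0 by field_simp]
    rw [show Finset.Icc (1:ℕ) 5 = {1,2,3,4,5} by decide]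
    rw [Finset.sum_insert (by decide), Finset.sum_insert (by decide),
        Finset.sum_insert (by decide), Finset.sum_insert (by decide), Finset.sum_singleton]
    push_cast
    simp only [hk]
    ring_nf
    ring_nf at h1c h1s h2c h2s h3c h3s h4c h4s h6c h6s E1 E2 E3 E4 E5 F1 F2 F3 F4 F5
    linear_combination a1/5 * h1c + b1/5 * h1s + a2/5 * h2c + b2/5 * h2s + a3/5 * h3c + b3/5 * h3s + a4/5 * h4c + b4/5 * h4s + a6/5 * h6c + b6/5 * h6s + a5/5 * (E1 + E2 + E3 + E4 + E5) + b5/5 * (F1 + F2 + F3 + F4 + F5) + ha5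
end
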